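/- Let k, c, ε > 0 be constants and let p = (1+ε)/d. Then whp every subset X ⊆ V(Q^d) of size |X| ≥ c·n·d^{−k} has edge boundary in Q^d_p satisfying |∂_{e,p}(X)| ≤ |X|·log d. -/

import Mathlib

open MeasureTheory Filter

noncomputable section

/-- The `d`-dimensional hypercube graph `Q^d`, on vertex set `{0,1}^d`. -/
def cubeGraph (d : ℕ) : SimpleGraph (Fin d → Bool) where
  Adj x y := hammingDist x y = 1
  symm := ⟨fun x y h => (hammingDist_comm y x).trans h⟩
  loopless := ⟨fun x (h : hammingDist x x = 1) => by rw [hammingDist_self] at h; exact absurd h (by norm_num)⟩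

/-- The spanning subgraph of `G` consisting of those edges `e` with `ω e = true`. -/
def percolate {V : Type*} (G : SimpleGraph V) (ω : Sym2 V → Bool) : SimpleGraph V where
  Adj x y := G.Adj x y ∧ ω s(x, y) = true
  symm := ⟨by
    rintro x y ⟨h1, h2⟩
    exact ⟨h1.symm, by rwa [Sym2.eq_swap]⟩⟩
  loopless := ⟨fun x h => G.loopless.1 x h.1⟩

/-- The Bernoulli measure on `Bool` with success probability `p` (truncated to `[0,1]`). -/
def bernoulliBool (p : ℝ) : Measure Bool :=
  (PMF.bernoulli (min (Real.toNNReal p) 1) (min_le_right _ _)).toMeasure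

instance (p : ℝ) : IsProbabilityMeasure (bernoulliBool p) := by
  unfold bernoulliBool; infer_instance

/-- The probability measure on edge-configurations of the `d`-dimensional hypercube in which
each potential edge is retained independently with probability `p`; the configuration space
is `Sym2 (Fin d → Bool) → Bool`, and `Q^d_p` is `percolate (cubeGraph d) ω`. -/
def cubeMeasure (d : ℕ) (p : ℝ) : Measure (Sym2 (Fin d → Bool) → Bool) :=
  Measure.pi fun _ => bernoulliBool p

/-- `C` is a largest connected component of `H`. -/
def IsLargestComponent {V : Type*} [Fintype V] (H : SimpleGraph V)
    (C : H.ConnectedComponent) : Prop :=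
  ∀ C' : H.ConnectedComponent, C'.supp.ncard ≤ C.supp.ncard

/-- The edge boundary of the vertex set `S` in the graph `H`: the set of edges of `H` with
exactly one endpoint in `S`. -/
def edgeBoundary {V : Type*} (H : SimpleGraph V) (S : Set V) : Set (Sym2 V) :=
  {e | e ∈ H.edgeSet ∧ ∃ x y, e = s(x, y) ∧ x ∈ S ∧ y ∉ S}

/-- The vertex boundary of the vertex set `S` in the graph `H`: the set of vertices outside
`S` having a neighbour in `S`. -/
def vertexBoundary {V : Type*} (H : SimpleGraph V) (S : Set V) : Set V :=
  {v | v ∉ S ∧ ∃ u ∈ S, H.Adj u v}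

/-- The survival probability of a Galton–Watson branching process with Poisson(`c`) offspring
distribution: one minus the extinction probability, the extinction probability being the least
fixed point in `[0,1]` of the probability generating function `s ↦ exp (c * (s - 1))` of the
Poisson(`c`) distribution. -/
def poissonSurvival (c : ℝ) : ℝ :=
  1 - sInf {s : ℝ | s ∈ Set.Icc (0 : ℝ) 1 ∧ Real.exp (c * (s - 1)) = s}

/-- `H` contains a complete minor of order `t`: there are `t` pairwise disjoint connected
branch sets with an edge of `H` between any two of them. -/
def HasCompleteMinor {V : Type*} (H : SimpleGraph V) (t : ℕ) : Prop :=
  ∃ B : Fin t → Set V,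
    (∀ i, (H.induce (B i)).Connected) ∧
    (Pairwise fun i j => Disjoint (B i) (B j)) ∧
    (∀ i j, i ≠ j → ∃ x ∈ B i, ∃ y ∈ B j, H.Adj x y)


/-! ### Auxiliary lemmas -/

lemma single_pow_div_le_exp (t : ℕ) : ((t:ℝ))^t / t.factorial ≤ Real.exp t := by
  calc ((t:ℝ))^t / t.factorial
      ≤ ∑ i ∈ Finset.range (t+1), (t:ℝ)^i / i.factorial := by
        refine Finset.single_le_sum (f := fun i => (t:ℝ)^i / i.factorial) ?_
          (Finset.self_mem_range_succ t)
        intro i _; positivity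
    _ ≤ Real.exp t := Real.sum_le_exp_of_nonneg (by positivity) _

lemma choose_le_e_pow (n t : ℕ) (ht : 0 < t) :
    (n.choose t : ℝ) ≤ (Real.exp 1 * n / t) ^ t := by
  have h1 : (n.choose t : ℝ) ≤ (n:ℝ)^t / t.factorial := by
    exact_mod_cast Nat.choose_le_pow_div t n
  have h2 := single_pow_div_le_exp t
  have htpos : (0:ℝ) < t := by exact_mod_cast ht
  have hfac : (0:ℝ) < t.factorial := by exact_mod_cast t.factorial_pos
  have hexp : ((t:ℝ))^t ≤ Real.exp t * t.factorial := by
    rw [div_le_iff₀ hfac] at h2; exact h2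
  have heq : (Real.exp 1 * n / t) ^ t = Real.exp t * (n:ℝ)^t / ((t:ℝ))^t := by
    rw [div_pow, mul_pow, Real.exp_one_pow]
  rw [heq]
  refine h1.trans ?_
  rw [div_le_div_iff₀ hfac (by positivity)]
  calc (n:ℝ)^t * (t:ℝ)^t ≤ (n:ℝ)^t * (Real.exp t * t.factorial) :=
        mul_le_mul_of_nonneg_left hexp (by positivity)
    _ = Real.exp t * (n:ℝ)^t * t.factorial := by ring

lemma exists_other' {V : Type*} (G : SimpleGraph V) {e : Sym2 V} {x : V}
    (he : e ∈ G.edgeSet) (hx : x ∈ e) : ∃ y, G.Adj x y ∧ e = s(x, y) := by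
  induction e with
  | _ a b =>
    rcases Sym2.mem_iff.mp hx with rfl | rfl
    · exact ⟨b, he, rfl⟩
    · exact ⟨a, (G.mem_edgeSet.mp he).symm, Sym2.eq_swap⟩

/-- the finset of coordinates where the two endpoints differ -/
def diffF {d : ℕ} : Sym2 (Fin d → Bool) → Finset (Fin d) :=
  Sym2.lift ⟨fun a b => Finset.univ.filter (fun i => a i ≠ b i), by
    intro a b; ext i
    simp only [Finset.mem_filter, and_congr_right_iff]
    intro _; exact ne_comm⟩

lemma diffF_mk {d : ℕ} (a b : Fin d → Bool) :
    diffF s(a, b) = Finset.univ.filter (fun i => a i ≠ b i) := rfl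

open Classical in
lemma inc_card {d : ℕ} (hd : 0 < d) (x : Fin d → Bool) :
    (((cubeGraph d).incidenceSet x).toFinite.toFinset).card ≤ d := by
  have key : ∀ e ∈ ((cubeGraph d).incidenceSet x).toFinite.toFinset,
      ∃ y, (cubeGraph d).Adj x y ∧ e = s(x, y) := by
    intro e he
    rw [Set.Finite.mem_toFinset] at he
    exact exists_other' _ he.1 he.2
  set f : Sym2 (Fin d → Bool) → Fin d := fun e =>
    if h : (diffF e).Nonempty then (diffF e).min' h else ⟨0, hd⟩ with hf
  have hchar : ∀ (y : Fin d → Bool), (cubeGraph d).Adj x y →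
      ∃ i, diffF s(x, y) = {i} ∧ f s(x, y) = i := by
    intro y hadj
    have hcard : (Finset.univ.filter (fun i => x i ≠ y i)).card = 1 := by
      have h : hammingDist x y = 1 := hadj
      unfold hammingDist at h; convert h
    rcases Finset.card_eq_one.mp hcard with ⟨i, hi⟩
    refine ⟨i, by rw [diffF_mk, hi], ?_⟩
    rw [hf]
    simp only [diffF_mk, hi]
    rw [dif_pos ⟨i, Finset.mem_singleton_self i⟩]
    exact Finset.min'_singleton i
  calc (((cubeGraph d).incidenceSet x).toFinite.toFinset).card
      ≤ (Finset.univ : Finset (Fin d)).card := by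
        refine Finset.card_le_card_of_injOn f (fun _ _ => Finset.mem_univ _) ?_
        intro e1 he1 e2 he2 hfe
        simp only [Finset.mem_coe] at he1 he2
        obtain ⟨y1, ha1, rfl⟩ := key e1 he1
        obtain ⟨y2, ha2, rfl⟩ := key e2 he2
        obtain ⟨i1, hd1, hfe1⟩ := hchar y1 ha1
        obtain ⟨i2, hd2, hfe2⟩ := hchar y2 ha2
        rw [hfe1, hfe2] at hfe
        rw [← hfe] at hd2
        have hy : y1 = y2 := by
          funext j
          have m1 : ∀ j, x j ≠ y1 j ↔ j = i1 := by
            intro j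
            constructor
            · intro hj
              have : j ∈ diffF s(x, y1) := by
                rw [diffF_mk]; exact Finset.mem_filter.mpr ⟨Finset.mem_univ _, hj⟩
              rwa [hd1, Finset.mem_singleton] at this
            · intro hj
              rw [hj]
              have : i1 ∈ diffF s(x, y1) := by rw [hd1]; exact Finset.mem_singleton_self _
              rw [diffF_mk, Finset.mem_filter] at this
              exact this.2
          have m2 : ∀ j, x j ≠ y2 j ↔ j = i1 := by
            intro j
            constructor
            · intro hj
              have : j ∈ diffF s(x, y2) := by
                rw [diffF_mk]; exact Finset.mem_filter.mpr ⟨Finset.mem_univ _, hj⟩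
              rwa [hd2, Finset.mem_singleton] at this
            · intro hj
              rw [hj]
              have : i1 ∈ diffF s(x, y2) := by rw [hd2]; exact Finset.mem_singleton_self _
              rw [diffF_mk, Finset.mem_filter] at this
              exact this.2
          by_cases hj : j = i1
          · subst hj
            have h1 : x j ≠ y1 j := (m1 j).mpr rfl
            have h2 : x j ≠ y2 j := (m2 j).mpr rfl
            revert h1 h2
            cases x j <;> cases y1 j <;> cases y2 j <;> simp
          · have h1 : ¬ (x j ≠ y1 j) := fun h => hj ((m1 j).mp h)
            have h2 : ¬ (x j ≠ y2 j) := fun h => hj ((m2 j).mp h)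
            push_neg at h1 h2
            rw [← h1, ← h2]
        rw [hy]
    _ = d := by simp

open Classical in
lemma boundary_card {d : ℕ} (hd : 0 < d) (X : Finset (Fin d → Bool)) :
    ((edgeBoundary (cubeGraph d) ↑X).toFinite.toFinset).card ≤ d * X.card := by
  have hsub : (edgeBoundary (cubeGraph d) (↑X : Set (Fin d → Bool))).toFinite.toFinset ⊆
      X.biUnion (fun x => ((cubeGraph d).incidenceSet x).toFinite.toFinset) := by
    intro e he
    rw [Set.Finite.mem_toFinset] at he
    obtain ⟨hes, x, y, hxy, hx, hy⟩ := he
    refine Finset.mem_biUnion.mpr ⟨x, hx, ?_⟩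
    rw [Set.Finite.mem_toFinset]
    exact ⟨hes, by rw [hxy]; exact Sym2.mem_mk_left x y⟩
  calc ((edgeBoundary (cubeGraph d) (↑X : Set (Fin d → Bool))).toFinite.toFinset).card
      ≤ (X.biUnion fun x => ((cubeGraph d).incidenceSet x).toFinite.toFinset).card :=
        Finset.card_le_card hsub
    _ ≤ ∑ x ∈ X, (((cubeGraph d).incidenceSet x).toFinite.toFinset).card :=
        Finset.card_biUnion_le
    _ ≤ ∑ _x ∈ X, d := Finset.sum_le_sum (fun x _ => inc_card hd x)
    _ = d * X.card := by rw [Finset.sum_const, smul_eq_mul, mul_comm]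

lemma mem_percolate_boundary {V : Type*} {G : SimpleGraph V} {ω : Sym2 V → Bool}
    {S : Set V} {e : Sym2 V} (he : e ∈ edgeBoundary (percolate G ω) S) :
    e ∈ edgeBoundary G S ∧ ω e = true := by
  obtain ⟨hes, x, y, rfl, hx, hy⟩ := he
  have hadj : G.Adj x y ∧ ω s(x, y) = true := (SimpleGraph.mem_edgeSet (percolate G ω)).mp hes
  exact ⟨⟨(G.mem_edgeSet).mpr hadj.1, x, y, rfl, hx, hy⟩, hadj.2⟩

lemma cyl_measure {d : ℕ} (p : ℝ) (T : Finset (Sym2 (Fin d → Bool))) :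
    cubeMeasure d p {ω | ∀ e ∈ T, ω e = true} ≤ ENNReal.ofReal p ^ T.card := by
  classical
  have hset : {ω : Sym2 (Fin d → Bool) → Bool | ∀ e ∈ T, ω e = true} =
      Set.pi Set.univ (fun e => if e ∈ T then {true} else Set.univ) := by
    ext ω
    simp only [Set.mem_setOf_eq, Set.mem_pi, Set.mem_univ, forall_true_left]
    constructor
    · intro h e; split_ifs with he
      · exact h e he
      · trivial
    · intro h e he
      have := h e; rw [if_pos he] at this; exact this
  rw [cubeMeasure, hset, Measure.pi_pi]
  have hb : bernoulliBool p {true} = ((min (Real.toNNReal p) 1 : NNReal) : ENNReal) := by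
    rw [bernoulliBool, PMF.toMeasure_apply_singleton _ _ (measurableSet_singleton _)]
    rfl
  calc ∏ e : Sym2 (Fin d → Bool), bernoulliBool p (if e ∈ T then ({true} : Set Bool) else Set.univ)
      = ∏ e : Sym2 (Fin d → Bool), (if e ∈ T then ((min (Real.toNNReal p) 1 : NNReal) : ENNReal) else 1) := by
        refine Finset.prod_congr rfl fun e _ => ?_
        split_ifs
        · exact hb
        · exact measure_univ
    _ = ((min (Real.toNNReal p) 1 : NNReal) : ENNReal) ^ T.card := by
        rw [Finset.prod_ite_mem, Finset.univ_inter, Finset.prod_const]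
    _ ≤ _ := pow_le_pow_left₀ zero_le (ENNReal.coe_le_coe.mpr (min_le_left _ _)) _

lemma perF (d m bF : ℕ) (ε : ℝ) (hd2 : 2 ≤ d) (hm : 1 ≤ m) (hbF : bF ≤ d * m)
    (hε : 0 < ε) (hq : Real.exp 1 * (1+ε) ≤ Real.log d) :
    (Nat.choose bF (⌊(m:ℝ)*Real.log d⌋₊+1) : ℝ) * ((1+ε)/d) ^ (⌊(m:ℝ)*Real.log d⌋₊+1) ≤
      ((Real.exp 1 * (1+ε) / Real.log d) ^ (Real.log d)) ^ m := by
  have hd0 : (0:ℝ) < d := by exact_mod_cast Nat.lt_of_lt_of_le (by norm_num) hd2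
  have hd1 : (1:ℝ) < d := by exact_mod_cast Nat.lt_of_lt_of_le (by norm_num) hd2
  set L := Real.log d with hLdef
  have hL : 0 < L := Real.log_pos hd1
  set t := ⌊(m:ℝ)*L⌋₊+1 with htdef
  have ht0 : 0 < t := Nat.succ_pos _
  have hm0 : (0:ℝ) < m := by exact_mod_cast hm
  have hmL : 0 < (m:ℝ)*L := by positivity
  have htR : (m:ℝ)*L < (t:ℝ) := by
    rw [htdef]; push_cast; exact Nat.lt_floor_add_one _
  have hq0 : 0 < Real.exp 1 * (1+ε) / L := by positivity
  have hq1 : Real.exp 1 * (1+ε) / L ≤ 1 := (div_le_one hL).mpr hq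
  have hchain : (Nat.choose bF t : ℝ) * ((1+ε)/d) ^ t ≤ (Real.exp 1 * (1+ε) / L) ^ t := by
    calc (Nat.choose bF t : ℝ) * ((1+ε)/d)^t
        ≤ ((d*m).choose t : ℝ) * ((1+ε)/d)^t :=
          mul_le_mul_of_nonneg_right (by exact_mod_cast Nat.choose_le_choose t hbF)
            (by positivity)
      _ ≤ (Real.exp 1 * (↑(d*m)) / t)^t * ((1+ε)/d)^t :=
          mul_le_mul_of_nonneg_right (choose_le_e_pow (d*m) t ht0) (by positivity)
      _ = ((Real.exp 1 * (1+ε) * m) / t)^t := by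
          rw [← mul_pow]; congr 1
          push_cast
          field_simp
      _ ≤ (Real.exp 1 * (1+ε) / L)^t := by
          apply pow_le_pow_left₀ (by positivity)
          have h1 : Real.exp 1 * (1+ε) * m / t ≤ Real.exp 1 * (1+ε) * m / ((m:ℝ)*L) :=
            div_le_div_of_nonneg_left (by positivity) hmL htR.le
          refine h1.trans (le_of_eq ?_)
          rw [mul_comm (m:ℝ) L, show Real.exp 1 * (1+ε) * m / (L * m) = Real.exp 1 * (1+ε) / L from
            mul_div_mul_right _ _ (ne_of_gt hm0)]
  refine hchain.trans ?_
  have e1 : (Real.exp 1 * (1+ε)/L)^t = (Real.exp 1 * (1+ε)/L) ^ ((t:ℕ):ℝ) :=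
    (Real.rpow_natCast _ t).symm
  rw [e1]
  have e2 : (Real.exp 1 * (1+ε)/L) ^ ((t:ℕ):ℝ) ≤ (Real.exp 1 * (1+ε)/L) ^ ((m:ℝ)*L) :=
    Real.rpow_le_rpow_of_exponent_ge hq0 hq1 htR.le
  refine e2.trans (le_of_eq ?_)
  rw [mul_comm (m:ℝ) L, Real.rpow_mul hq0.le, Real.rpow_natCast]


open Classical in
lemma core_bound (k c ε : ℝ) (hc : 0 < c) (hε : 0 < ε) (d : ℕ)
    (hd2 : 2 ≤ d) (hq : Real.exp 1 * (1+ε) ≤ Real.log d)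
    (hγ : (Real.exp 1 * (d:ℝ)^(k:ℝ) / c) * (Real.exp 1 * (1+ε) / Real.log d) ^ (Real.log d)
      ≤ 1/2) :
    cubeMeasure d ((1+ε)/d)
      ({ω | ∀ X : Set (Fin d → Bool),
          c * 2 ^ d * (d : ℝ) ^ (-k) ≤ (X.ncard : ℝ) →
          ((edgeBoundary (percolate (cubeGraph d) ω) X).ncard : ℝ) ≤
            (X.ncard : ℝ) * Real.log d}ᶜ)
      ≤ ENNReal.ofReal (4 * ((Real.exp 1 * (d:ℝ)^(k:ℝ) / c) *
          (Real.exp 1 * (1+ε) / Real.log d) ^ (Real.log d))) := by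
  classical
  have hd0 : 0 < d := lt_of_lt_of_le (by norm_num) hd2
  have hd0R : (0:ℝ) < d := by exact_mod_cast hd0
  have hd1R : (1:ℝ) < d := by exact_mod_cast lt_of_lt_of_le (by norm_num) hd2
  have hL : 0 < Real.log d := Real.log_pos hd1R
  have hp0 : (0:ℝ) ≤ (1+ε)/d := by positivity
  have hq0 : 0 < Real.exp 1 * (1+ε) / Real.log d := by positivity
  set q : ℝ := Real.exp 1 * (1+ε) / Real.log d with hqdef
  set r : ℝ := q ^ (Real.log d) with hrdef
  have hr0 : 0 ≤ r := Real.rpow_nonneg hq0.le _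
  set γ : ℝ := (Real.exp 1 * (d:ℝ)^(k:ℝ) / c) * r with hγdef
  have hγ0 : 0 ≤ γ := by
    have : (0:ℝ) ≤ Real.exp 1 * (d:ℝ)^(k:ℝ) / c := by positivity
    exact mul_nonneg this hr0
  set t : ℕ → ℕ := fun m => ⌊(m:ℝ) * Real.log d⌋₊ + 1 with htdef
  set B : Finset (Fin d → Bool) → Finset (Sym2 (Fin d → Bool)) :=
    fun F => (edgeBoundary (cubeGraph d) ↑F).toFinite.toFinset with hBdef
  set S : Finset (Finset (Fin d → Bool)) :=
    Finset.univ.filter (fun F => c * 2^d * (d:ℝ)^(-k) ≤ (F.card:ℝ)) with hSdef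
  -- size positivity on S
  have hSm : ∀ F ∈ S, 1 ≤ F.card ∧ c * 2^d * (d:ℝ)^(-k) ≤ (F.card:ℝ) := by
    intro F hF
    have hsz := (Finset.mem_filter.mp hF).2
    have hpos : (0:ℝ) < c * 2^d * (d:ℝ)^(-k) := by
      have : (0:ℝ) < (d:ℝ)^(-k) := Real.rpow_pos_of_pos hd0R _
      positivity
    have : (0:ℝ) < (F.card:ℝ) := lt_of_lt_of_le hpos hsz
    exact ⟨Nat.succ_le_of_lt (by exact_mod_cast this), hsz⟩
  -- STEP 1: inclusion of the bad event into a union of cylinders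
  have hsub : ({ω : Sym2 (Fin d → Bool) → Bool | ∀ X : Set (Fin d → Bool),
        c * 2 ^ d * (d : ℝ) ^ (-k) ≤ (X.ncard : ℝ) →
        ((edgeBoundary (percolate (cubeGraph d) ω) X).ncard : ℝ) ≤
          (X.ncard : ℝ) * Real.log d}ᶜ) ⊆
      ⋃ F ∈ S, ⋃ T ∈ Finset.powersetCard (t F.card) (B F),
        {ω : Sym2 (Fin d → Bool) → Bool | ∀ e ∈ T, ω e = true} := by
    intro ω hω
    simp only [Set.mem_compl_iff, Set.mem_setOf_eq, not_forall, not_le] at hω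
    obtain ⟨X, hXsize, hXbig⟩ := hω
    have hXfin : X.Finite := Set.toFinite X
    set F := hXfin.toFinset with hFdef
    have hFcard : X.ncard = F.card := Set.ncard_eq_toFinset_card X hXfin
    have hFS : F ∈ S := Finset.mem_filter.mpr ⟨Finset.mem_univ _, by
      rw [← hFcard]; exact hXsize⟩
    have hPfin : (edgeBoundary (percolate (cubeGraph d) ω) X).Finite := Set.toFinite _
    set P := hPfin.toFinset with hPdef
    have hPB : P ⊆ B F := by
      intro e he
      rw [hPdef, Set.Finite.mem_toFinset] at he
      have h := mem_percolate_boundary he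
      rw [hBdef, Set.Finite.mem_toFinset]
      have hcoe : (↑F : Set (Fin d → Bool)) = X := hXfin.coe_toFinset
      rw [hcoe]
      exact h.1
    have hPcard : t F.card ≤ P.card := by
      have hnc : (edgeBoundary (percolate (cubeGraph d) ω) X).ncard = P.card :=
        Set.ncard_eq_toFinset_card _ hPfin
      have h1 : (F.card : ℝ) * Real.log d < (P.card : ℝ) := by
        rw [← hnc, ← hFcard]
        exact hXbig
      have h2 : ⌊(F.card:ℝ) * Real.log d⌋₊ < P.card := by
        rw [Nat.floor_lt (mul_nonneg (Nat.cast_nonneg _) hL.le)]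
        exact h1
      exact Nat.succ_le_of_lt h2
    obtain ⟨T, hTP, hTcard⟩ := Finset.exists_subset_card_eq hPcard
    refine Set.mem_biUnion hFS ?_
    refine Set.mem_biUnion (Finset.mem_powersetCard.mpr ⟨hTP.trans hPB, hTcard⟩) ?_
    intro e he
    have heP := hTP he
    rw [hPdef, Set.Finite.mem_toFinset] at heP
    exact (mem_percolate_boundary heP).2
  -- STEP 2: union bound
  refine le_trans (measure_mono hsub) ?_
  refine le_trans (measure_biUnion_finset_le S _) ?_
  have step2 : ∀ F ∈ S,
      cubeMeasure d ((1+ε)/d) (⋃ T ∈ Finset.powersetCard (t F.card) (B F),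
        {ω : Sym2 (Fin d → Bool) → Bool | ∀ e ∈ T, ω e = true}) ≤
      ENNReal.ofReal (r ^ F.card) := by
    intro F hF
    obtain ⟨hm1, hsz⟩ := hSm F hF
    refine le_trans (measure_biUnion_finset_le _ _) ?_
    have hcyl : ∀ T ∈ Finset.powersetCard (t F.card) (B F),
        cubeMeasure d ((1+ε)/d) {ω : Sym2 (Fin d → Bool) → Bool | ∀ e ∈ T, ω e = true} ≤
          ENNReal.ofReal (((1+ε)/d) ^ (t F.card)) := by
      intro T hT
      have h1 := cyl_measure ((1+ε)/d) T
      rw [(Finset.mem_powersetCard.mp hT).2] at h1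
      refine h1.trans (le_of_eq ?_)
      rw [ENNReal.ofReal_pow hp0]
    calc ∑ T ∈ Finset.powersetCard (t F.card) (B F),
          cubeMeasure d ((1+ε)/d) {ω : Sym2 (Fin d → Bool) → Bool | ∀ e ∈ T, ω e = true}
        ≤ ∑ _T ∈ Finset.powersetCard (t F.card) (B F),
            ENNReal.ofReal (((1+ε)/d) ^ (t F.card)) := Finset.sum_le_sum hcyl
      _ = ((B F).card.choose (t F.card)) * ENNReal.ofReal (((1+ε)/d) ^ (t F.card)) := by
          rw [Finset.sum_const, Finset.card_powersetCard, nsmul_eq_mul]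
      _ ≤ ENNReal.ofReal (r ^ F.card) := by
          rw [← ENNReal.ofReal_natCast ((B F).card.choose (t F.card)),
            ← ENNReal.ofReal_mul (Nat.cast_nonneg _)]
          apply ENNReal.ofReal_le_ofReal
          have hbF : (B F).card ≤ d * F.card := boundary_card hd0 F
          exact perF d F.card ((B F).card) ε hd2 hm1 hbF hε hq
  refine le_trans (Finset.sum_le_sum step2) ?_
  rw [← ENNReal.ofReal_sum_of_nonneg (fun F _ => pow_nonneg hr0 _)]
  apply ENNReal.ofReal_le_ofReal
  -- STEP 3: real grouping bound
  have perM : ∀ m ∈ S.image Finset.card,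
      ((S.filter (fun F => F.card = m)).card) • r ^ m ≤ γ * (1/2)^(m-1) := by
    intro m hm
    obtain ⟨F, hFS, rfl⟩ := Finset.mem_image.mp hm
    obtain ⟨hm1, hsz⟩ := hSm F hFS
    set m := F.card
    have hm0R : (0:ℝ) < m := by exact_mod_cast hm1
    -- count bound
    have hcount : ((S.filter (fun G => G.card = m)).card : ℝ) ≤ ((2^d).choose m : ℝ) := by
      have hsubset : S.filter (fun G => G.card = m) ⊆ Finset.univ.powersetCard m := by
        intro G hG
        exact Finset.mem_powersetCard_univ.mpr (Finset.mem_filter.mp hG).2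
      have := Finset.card_le_card hsubset
      simp only [Finset.card_powersetCard, Finset.card_univ] at this
      have hcard : Fintype.card (Fin d → Bool) = 2^d := by simp
      rw [hcard] at this
      exact_mod_cast this
    have hchoose : ((2^d).choose m : ℝ) ≤ (Real.exp 1 * (2^d : ℕ) / m) ^ m :=
      choose_le_e_pow (2^d) m hm1
    -- en/m ≤ e d^k / c
    have hbase : Real.exp 1 * ((2^d : ℕ):ℝ) / m ≤ Real.exp 1 * (d:ℝ)^(k:ℝ) / c := by
      have hdk : (0:ℝ) < (d:ℝ)^(k:ℝ) := Real.rpow_pos_of_pos hd0R _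
      have hkey : c * 2^d ≤ (m:ℝ) * (d:ℝ)^(k:ℝ) := by
        have h1 : c * 2^d * (d:ℝ)^(-k) * (d:ℝ)^(k:ℝ) ≤ (m:ℝ) * (d:ℝ)^(k:ℝ) :=
          mul_le_mul_of_nonneg_right hsz hdk.le
        have h2 : (d:ℝ)^(-k) * (d:ℝ)^(k:ℝ) = 1 := by
          rw [← Real.rpow_add hd0R]
          norm_num
        calc c * 2^d = c * 2^d * ((d:ℝ)^(-k) * (d:ℝ)^(k:ℝ)) := by rw [h2, mul_one]
          _ = c * 2^d * (d:ℝ)^(-k) * (d:ℝ)^(k:ℝ) := by ring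
          _ ≤ (m:ℝ) * (d:ℝ)^(k:ℝ) := h1
      rw [div_le_div_iff₀ hm0R hc]
      have h3 : Real.exp 1 * (c * 2^d) ≤ Real.exp 1 * ((m:ℝ) * (d:ℝ)^(k:ℝ)) :=
        mul_le_mul_of_nonneg_left hkey (Real.exp_pos 1).le
      calc Real.exp 1 * ((2^d : ℕ):ℝ) * c = Real.exp 1 * (c * 2^d) := by push_cast; ring
        _ ≤ Real.exp 1 * ((m:ℝ) * (d:ℝ)^(k:ℝ)) := h3
        _ = Real.exp 1 * (d:ℝ)^(k:ℝ) * m := by ring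
    have hγm : ((S.filter (fun G => G.card = m)).card) • r ^ m ≤ γ ^ m := by
      rw [nsmul_eq_mul]
      calc ((S.filter (fun G => G.card = m)).card : ℝ) * r ^ m
          ≤ ((2^d).choose m : ℝ) * r ^ m :=
            mul_le_mul_of_nonneg_right hcount (pow_nonneg hr0 _)
        _ ≤ (Real.exp 1 * ((2^d:ℕ):ℝ) / m) ^ m * r ^ m := by
            refine mul_le_mul_of_nonneg_right ?_ (pow_nonneg hr0 _)
            exact_mod_cast hchoose
        _ = ((Real.exp 1 * ((2^d:ℕ):ℝ) / m) * r) ^ m := by rw [mul_pow]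
        _ ≤ ((Real.exp 1 * (d:ℝ)^(k:ℝ) / c) * r) ^ m := by
            apply pow_le_pow_left₀ (by positivity)
            exact mul_le_mul_of_nonneg_right hbase hr0
        _ = γ ^ m := by rw [hγdef]
    refine hγm.trans ?_
    have hsplit : γ ^ m = γ ^ (m - 1) * γ := by
      rw [← pow_succ]
      congr 1
      omega
    rw [hsplit]
    have h4 : γ ^ (m-1) ≤ (1/2:ℝ)^(m-1) := pow_le_pow_left₀ hγ0 hγ _
    calc γ ^ (m-1) * γ ≤ (1/2:ℝ)^(m-1) * γ := mul_le_mul_of_nonneg_right h4 hγ0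
      _ = γ * (1/2)^(m-1) := by ring
  calc ∑ F ∈ S, r ^ F.card
      = ∑ m ∈ S.image Finset.card, ((S.filter (fun F => F.card = m)).card) • r ^ m :=
        Finset.sum_comp (fun m => r ^ m) Finset.card
    _ ≤ ∑ m ∈ S.image Finset.card, γ * (1/2)^(m-1) := Finset.sum_le_sum perM
    _ ≤ ∑ m ∈ Finset.range (2^d + 1), γ * (1/2)^(m-1) := by
        refine Finset.sum_le_sum_of_subset_of_nonneg ?_ (fun m _ _ => by positivity)
        intro m hm
        obtain ⟨F, _, rfl⟩ := Finset.mem_image.mp hm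
        have : F.card ≤ 2^d := by
          have h5 := Finset.card_le_univ F
          simpa using h5
        exact Finset.mem_range.mpr (Nat.lt_succ_of_le this)
    _ ≤ 4 * γ := by
        have hterm : ∀ m, γ * (1/2:ℝ)^(m-1) ≤ γ * (2 * (1/2)^m) := by
          intro m
          refine mul_le_mul_of_nonneg_left ?_ hγ0
          cases m with
          | zero => norm_num
          | succ n =>
            simp only [Nat.add_sub_cancel]
            rw [pow_succ]
            ring_nf
            exact le_refl _
        calc ∑ m ∈ Finset.range (2^d + 1), γ * (1/2:ℝ)^(m-1)
            ≤ ∑ m ∈ Finset.range (2^d + 1), γ * (2 * (1/2)^m) :=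
              Finset.sum_le_sum (fun m _ => hterm m)
          _ = 2 * γ * ∑ m ∈ Finset.range (2^d + 1), (1/2:ℝ)^m := by
              rw [Finset.mul_sum]; refine Finset.sum_congr rfl fun m _ => by ring
          _ ≤ 2 * γ * 2 := by
              refine mul_le_mul_of_nonneg_left (sum_geometric_two_le _) (by positivity)
          _ = 4 * γ := by ring


/-- whp every set of at least `c · n · d^(-k)` vertices has edge boundary in
`Q^d_p` of size at most `|X| log d`. -/
theorem edge_boundary_upper (k c ε : ℝ) (hk : 0 < k) (hc : 0 < c) (hε : 0 < ε) :
    Tendsto (fun d : ℕ =>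
        cubeMeasure d ((1 + ε) / d)
          {ω | ∀ X : Set (Fin d → Bool),
            c * 2 ^ d * (d : ℝ) ^ (-k) ≤ (X.ncard : ℝ) →
            ((edgeBoundary (percolate (cubeGraph d) ω) X).ncard : ℝ) ≤
              (X.ncard : ℝ) * Real.log d})
      atTop (nhds 1) := by
  classical
  set γfun : ℕ → ℝ := fun d =>
    (Real.exp 1 * (d:ℝ)^(k:ℝ) / c) * (Real.exp 1 * (1+ε) / Real.log d) ^ (Real.log d)
    with hγfdef
  have hLtend : Tendsto (fun d : ℕ => Real.log d) atTop atTop :=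
    Real.tendsto_log_atTop.comp tendsto_natCast_atTop_atTop
  have hLLtend : Tendsto (fun d : ℕ => Real.log (Real.log d)) atTop atTop :=
    Real.tendsto_log_atTop.comp hLtend
  set E : ℝ := Real.log (Real.exp 1 * (1+ε)) with hEdef
  have hγtend : Tendsto γfun atTop (nhds 0) := by
    have hA : Tendsto (fun d : ℕ =>
        (1 - Real.log c) + Real.log d * ((k + E) - Real.log (Real.log d))) atTop atBot := by
      apply tendsto_atBot_add_const_left
      apply Tendsto.atTop_mul_atBot₀ hLtend
      apply tendsto_atBot_add_const_left
      exact tendsto_neg_atTop_atBot.comp hLLtend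
    have hg : Tendsto (fun d : ℕ =>
        Real.exp ((1 - Real.log c) + Real.log d * ((k + E) - Real.log (Real.log d))))
        atTop (nhds 0) := Real.tendsto_exp_atBot.comp hA
    refine Tendsto.congr' ?_ hg
    filter_upwards [eventually_ge_atTop 2] with d hd2
    have hd0R : (0:ℝ) < d := by exact_mod_cast lt_of_lt_of_le (by norm_num) hd2
    have hd1R : (1:ℝ) < d := by exact_mod_cast lt_of_lt_of_le (by norm_num) hd2
    have hL : 0 < Real.log d := Real.log_pos hd1R
    have hnum : (0:ℝ) < Real.exp 1 * (1+ε) := by positivity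
    have h1 : Real.exp 1 * (d:ℝ)^(k:ℝ)/c = Real.exp (1 + Real.log d * k - Real.log c) := by
      rw [Real.exp_sub, Real.exp_add, Real.exp_log hc, Real.rpow_def_of_pos hd0R]
    have h2 : (Real.exp 1 * (1+ε) / Real.log d) ^ (Real.log d) =
        Real.exp ((E - Real.log (Real.log d)) * Real.log d) := by
      rw [Real.rpow_def_of_pos (by positivity), Real.log_div hnum.ne' hL.ne']
    rw [hγfdef]
    simp only
    rw [h1, h2, ← Real.exp_add]
    congr 1
    ring
  have hhalf : ∀ᶠ d : ℕ in atTop, γfun d ≤ 1/2 :=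
    hγtend.eventually (eventually_le_nhds (by norm_num : (0:ℝ) < 1/2))
  have hqcond : ∀ᶠ d : ℕ in atTop, Real.exp 1 * (1+ε) ≤ Real.log d :=
    hLtend.eventually_ge_atTop _
  have hbound : ∀ᶠ d : ℕ in atTop,
      cubeMeasure d ((1 + ε) / d)
        ({ω | ∀ X : Set (Fin d → Bool),
          c * 2 ^ d * (d : ℝ) ^ (-k) ≤ (X.ncard : ℝ) →
          ((edgeBoundary (percolate (cubeGraph d) ω) X).ncard : ℝ) ≤
            (X.ncard : ℝ) * Real.log d}ᶜ) ≤ ENNReal.ofReal (4 * γfun d) := by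
    filter_upwards [eventually_ge_atTop 2, hqcond, hhalf] with d hd2 hq hγ
    exact core_bound k c ε hc hε d hd2 hq hγ
  have hoftend : Tendsto (fun d => ENNReal.ofReal (4 * γfun d)) atTop (nhds 0) := by
    have h0 : Tendsto (fun d => 4 * γfun d) atTop (nhds 0) := by
      simpa using hγtend.const_mul 4
    simpa using ENNReal.tendsto_ofReal h0
  have hbad : Tendsto (fun d : ℕ =>
      cubeMeasure d ((1 + ε) / d)
        ({ω | ∀ X : Set (Fin d → Bool),
          c * 2 ^ d * (d : ℝ) ^ (-k) ≤ (X.ncard : ℝ) →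
          ((edgeBoundary (percolate (cubeGraph d) ω) X).ncard : ℝ) ≤
            (X.ncard : ℝ) * Real.log d}ᶜ)) atTop (nhds 0) :=
    tendsto_of_tendsto_of_tendsto_of_le_of_le' tendsto_const_nhds hoftend
      (Eventually.of_forall fun d => zero_le) hbound
  have hfin : ∀ d : ℕ,
      cubeMeasure d ((1 + ε) / d)
        {ω | ∀ X : Set (Fin d → Bool),
          c * 2 ^ d * (d : ℝ) ^ (-k) ≤ (X.ncard : ℝ) →
          ((edgeBoundary (percolate (cubeGraph d) ω) X).ncard : ℝ) ≤
            (X.ncard : ℝ) * Real.log d} =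
      1 - cubeMeasure d ((1 + ε) / d)
        ({ω | ∀ X : Set (Fin d → Bool),
          c * 2 ^ d * (d : ℝ) ^ (-k) ≤ (X.ncard : ℝ) →
          ((edgeBoundary (percolate (cubeGraph d) ω) X).ncard : ℝ) ≤
            (X.ncard : ℝ) * Real.log d}ᶜ) := by
    intro d
    haveI : IsProbabilityMeasure (cubeMeasure d ((1 + ε) / d)) := by
      unfold cubeMeasure; infer_instance
    rw [prob_compl_eq_one_sub ((Set.to_countable _).measurableSet)]
    rw [ENNReal.sub_sub_cancel ENNReal.one_ne_top prob_le_one]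
  have hmain := ENNReal.Tendsto.sub
    (tendsto_const_nhds : Tendsto (fun _ : ℕ => (1:ENNReal)) atTop (nhds 1)) hbad
    (Or.inl ENNReal.one_ne_top)
  rw [tsub_zero] at hmain
  exact Tendsto.congr (fun d => (hfin d).symm) hmain


end
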